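/- Closed form of the energy dissipation per step: Let a > 0, α > 0, k > 0, T > 0, h > 0, R > 0, N > 0. Define Z = 1 + a·Γ(α+1)·(N·k·T/(h·R))^{α+1} and ε = 1 − 1/Z. Then (α+1)·k·T·ε = ((α+1)·ε/N) · (ε/((1−ε)·a·Γ(α+1)))^{1/(α+1)} · h·R. In particular, for fixed error probability ε, degeneracy parameters a, α, and number of states N, the energy dissipation per computational step E(T) = (α+1)·k·T·ε is proportional to the rate of computation R, so the rate of heat production Q = R·E(T) is proportional to R². -/

import Mathlib

open Real

/-- Closed form of the energy dissipation per step: with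
`Z = 1 + a·Γ(α+1)·(NkT/(hR))^{α+1}` and `ε = 1 − 1/Z`, the dissipated
energy per step `E(T) = (α+1)·k·T·ε` equals
`((α+1)·ε/N)·(ε/((1−ε)·a·Γ(α+1)))^{1/(α+1)}·hR`, so that it is
proportional to the rate `R`, and the heat production rate
`Q = R·E(T)` is proportional to `R²`. -/
theorem energy_dissipation_closed_form
    (a α k T h R N : ℝ) (ha : 0 < a) (hα : 0 < α) (hk : 0 < k)
    (hT : 0 < T) (hh : 0 < h) (hR : 0 < R) (hN : 0 < N)
    (Z ε : ℝ)
    (hZ : Z = 1 + a * Real.Gamma (α + 1) * (N * k * T / (h * R)) ^ (α + 1))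
    (hε : ε = 1 - 1 / Z) :
    (α + 1) * k * T * ε
      = ((α + 1) * ε / N) *
        (ε / ((1 - ε) * a * Real.Gamma (α + 1))) ^ (1 / (α + 1)) * (h * R) ∧
    R * ((α + 1) * k * T * ε)
      = ((α + 1) * ε / N) *
        (ε / ((1 - ε) * a * Real.Gamma (α + 1))) ^ (1 / (α + 1)) * h * R ^ (2:ℝ) := by
  have hG : 0 < Real.Gamma (α + 1) := Real.Gamma_pos_of_pos (by linarith)
  set x : ℝ := N * k * T / (h * R) with hx
  have hxpos : 0 < x := by positivity
  have hZpos : 0 < Z := by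
    rw [hZ]; positivity
  have hZne : Z ≠ 0 := hZpos.ne'
  have h1ε : 1 - ε = 1 / Z := by rw [hε]; ring
  have hεeq : ε = (Z - 1) / Z := by rw [hε]; field_simp
  have hkey : ε / ((1 - ε) * a * Real.Gamma (α + 1)) = x ^ (α + 1) := by
    rw [h1ε, hεeq, hZ]
    field_simp
    ring
  have hroot : (ε / ((1 - ε) * a * Real.Gamma (α + 1))) ^ (1 / (α + 1)) = x := by
    rw [hkey, ← Real.rpow_mul hxpos.le, mul_one_div, div_self (by linarith), Real.rpow_one]
  rw [hroot]
  constructor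
  · rw [hx]; field_simp
  · rw [hx, Real.rpow_two]; field_simp
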